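/- Let T be a set and 𝒜 a collection of nonempty subsets of T satisfying the SHAPE condition. Then the family of indicator functions (1_A)_{A ∈ 𝒜}, viewed as elements of the real vector space of functions T → ℝ, is linearly independent over ℝ. -/

import Mathlib

/-- **SHAPE condition ⇒ linear independence of indicators.**
Let `T` be a set and `𝒜` a collection of nonempty subsets of `T` satisfying the SHAPE
condition. Then the family of indicator functions `(1_A)_{A ∈ 𝒜}`, viewed as elements of
the real vector space of functions `T → ℝ`, is linearly independent over `ℝ`. -/
theorem stmt_0 {T : Type*} (𝒜 : Set (Set T))
    (hne : ∀ A ∈ 𝒜, A.Nonempty)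
    (hshape : ∀ (n : ℕ) (A : Set T) (As : Fin (n + 1) → Set T),
      A ∈ 𝒜 → (∀ i, As i ∈ 𝒜) → A ⊆ ⋃ i, As i → ∃ j, A ⊆ As j) :
    LinearIndependent ℝ
      (fun A : 𝒜 => Set.indicator (A : Set T) (fun _ => (1 : ℝ))) := by
  classical
  rw [linearIndependent_iff']
  intro s g hsum i hi
  by_contra hgi
  set s' : Finset 𝒜 := s.filter (fun j => g j ≠ 0) with hs'
  have hi' : i ∈ s' := Finset.mem_filter.2 ⟨hi, hgi⟩
  obtain ⟨A, hA, hAmax⟩ := s'.exists_maximal ⟨i, hi'⟩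
  have key : ∃ t ∈ (A : Set T), ∀ B ∈ s', B ≠ A → t ∉ (B : Set T) := by
    by_contra h
    push_neg at h
    have hsub : (A : Set T) ⊆ ⋃ B ∈ (s'.erase A), (B : Set T) := by
      intro t ht
      obtain ⟨B, hB, hBA, htB⟩ := h t ht
      exact Set.mem_biUnion (Finset.mem_erase.2 ⟨hBA, hB⟩) htB
    have hne' : (s'.erase A).Nonempty := by
      rcases hne A A.2 with ⟨t, ht⟩
      rcases Set.mem_iUnion₂.1 (hsub ht) with ⟨B, hB, _⟩
      exact ⟨B, hB⟩
    obtain ⟨n, hn⟩ : ∃ n, (s'.erase A).card = n + 1 :=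
      ⟨(s'.erase A).card - 1, (Nat.succ_pred_eq_of_pos (Finset.card_pos.2 hne')).symm⟩
    have e : {x // x ∈ s'.erase A} ≃ Fin (n + 1) := (s'.erase A).equivFin.trans (finCongr hn)
    set f : Fin (n + 1) → 𝒜 := fun k => (e.symm k : 𝒜) with hf
    have hsub2 : (A : Set T) ⊆ ⋃ k, ((f k : 𝒜) : Set T) := by
      intro t ht
      rcases Set.mem_iUnion₂.1 (hsub ht) with ⟨B, hB, htB⟩
      refine Set.mem_iUnion.2 ⟨e ⟨B, hB⟩, ?_⟩
      simp [hf, htB]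
    obtain ⟨j, hj⟩ := hshape n (A : Set T) (fun k => ((f k : 𝒜) : Set T)) A.2
      (fun k => (f k).2) hsub2
    have hjmem : (f j : 𝒜) ∈ s'.erase A := (e.symm j).2
    have hAne : A ≠ f j := fun hAe => (Finset.mem_erase.1 hjmem).1 hAe.symm
    have : A < f j := lt_of_le_of_ne (Subtype.coe_le_coe.1 hj) hAne
    exact lt_irrefl _ (lt_of_lt_of_le this (hAmax (Finset.mem_of_mem_erase hjmem) this.le))
  obtain ⟨t, htA, ht⟩ := key
  have hsum' : ∑ j ∈ s, g j * Set.indicator (j : Set T) (fun _ => (1 : ℝ)) t = 0 := by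
    have := congrFun hsum t
    simpa [Finset.sum_apply] using this
  have hAs : A ∈ s := (Finset.mem_filter.1 hA).1
  have hzero : ∀ b ∈ s, b ≠ A → g b * Set.indicator (b : Set T) (fun _ => (1 : ℝ)) t = 0 := by
    intro b hb hbA
    by_cases hgb : g b = 0
    · simp [hgb]
    · have hb' : b ∈ s' := Finset.mem_filter.2 ⟨hb, hgb⟩
      have : t ∉ (b : Set T) := ht b hb' hbA
      simp [Set.indicator_of_notMem this]
  have : g A * Set.indicator (A : Set T) (fun _ => (1 : ℝ)) t = 0 := by
    rw [← Finset.sum_eq_single A hzero (fun h => absurd hAs h)]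
    exact hsum'
  rw [Set.indicator_of_mem htA, mul_one] at this
  exact (Finset.mem_filter.1 hA).2 this
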